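/- Let Γ be a finitely generated amenable group with a finite symmetric generating set Σ. For every ε>0 there exists δ>0 such that for every subgroup H ⊆ Γ and every δ-Følner set Q in the Cayley graph Cay(Γ,Σ), there exists a subset J ⊆ Q with |J| < ε|Q| such that the image π_H(Q∖J) under the quotient map π_H : Γ → Γ/H, π_H(x) = Hx, is an ε-Følner set in the Schreier graph Sch(Γ/H, Σ). -/

import Mathlib

open scoped ENNReal
open MeasureTheory

namespace AFPaper

variable {V : Type*} {W : Type*}

/-- The ball of radius `r` around `x` in the graph `G`. -/
def gball (G : SimpleGraph V) (x : V) (r : ℕ) : Set V :=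
  {y | G.Reachable x y ∧ G.dist x y ≤ r}

/-- All vertex degrees of `G` are at most `d`. -/
def DegLE (G : SimpleGraph V) (d : ℕ) : Prop :=
  ∀ v : V, (G.neighborSet v).Finite ∧ (G.neighborSet v).ncard ≤ d

/-- The boundary of `F` inside the induced subgraph on the ambient set `L`:
vertices of `F` adjacent (in `G`) to some vertex of `L` outside `F`. -/
def boundaryIn (G : SimpleGraph V) (L F : Set V) : Set V :=
  {x ∈ F | ∃ y ∈ L \ F, G.Adj x y}

/-- The boundary of `F` in `G`. -/
def boundary (G : SimpleGraph V) (F : Set V) : Set V :=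
  boundaryIn G Set.univ F

/-- `F` is an `ε`-Følner set with respect to the induced subgraph on `L`. -/
def IsFolnerIn (G : SimpleGraph V) (L : Set V) (ε : ℝ) (F : Set V) : Prop :=
  F.Finite ∧ ((boundaryIn G L F).ncard : ℝ) < ε * (F.ncard : ℝ)

/-- `F` is an `ε`-Følner set in `G`. -/
def IsFolner (G : SimpleGraph V) (ε : ℝ) (F : Set V) : Prop :=
  IsFolnerIn G Set.univ ε F

/-- The set `F` has diameter at most `r` in `G`. -/
def DiamLE (G : SimpleGraph V) (r : ℕ) (F : Set V) : Prop :=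
  ∀ x ∈ F, ∀ y ∈ F, G.Reachable x y ∧ G.dist x y ≤ r

/-- The connected component of `x` in the subgraph of `G` induced on `S`. -/
def componentIn (G : SimpleGraph V) (S : Set V) (x : V) : Set V :=
  {y | ∃ (hx : x ∈ S) (hy : y ∈ S), (G.induce S).Reachable ⟨x, hx⟩ ⟨y, hy⟩}

/-- All connected components of the subgraph induced on `S` have size at most `k`. -/
def SmallComponents (G : SimpleGraph V) (S : Set V) (k : ℕ) : Prop :=
  ∀ x ∈ S, (componentIn G S x).Finite ∧ (componentIn G S x).ncard ≤ k

/-- A witness for Property A with accuracy `ε` and radius `r`. -/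
def PropertyAWith (G : SimpleGraph V) (ε : ℝ) (r : ℕ) : Prop :=
  ∃ Θ : V → V → ℝ,
    (∀ x, (Function.support (Θ x)).Finite) ∧
    (∀ x y, 0 ≤ Θ x y) ∧
    (∀ x, (∑ᶠ y, Θ x y) = 1) ∧
    (∀ x y, Θ x y ≠ 0 → y ∈ gball G x r) ∧
    (∀ x y, G.Adj x y → (∑ᶠ z, |Θ x z - Θ y z|) < ε)

/-- Property A for graphs. -/
def PropertyA (G : SimpleGraph V) : Prop :=
  ∀ ε : ℝ, 0 < ε → ∃ r : ℕ, 1 ≤ r ∧ PropertyAWith G ε r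

/-- Uniform local amenability. -/
def UniformlyLocallyAmenable (G : SimpleGraph V) : Prop :=
  ∀ ε : ℝ, 0 < ε → ∃ k : ℕ, 0 < k ∧
    ∀ L : Set V, L.Finite → L.Nonempty →
      ∃ M : Set V, M ⊆ L ∧ M.Nonempty ∧ M.ncard ≤ k ∧ IsFolnerIn G L ε M

/-- Local hyperfiniteness. -/
def LocallyHyperfinite (G : SimpleGraph V) : Prop :=
  ∀ ε : ℝ, 0 < ε → ∃ k : ℕ, 0 < k ∧
    ∀ L : Set V, L.Finite → L.Nonempty →
      ∃ L' : Set V, L' ⊆ L ∧ ((L'.ncard : ℝ) < ε * (L.ncard : ℝ)) ∧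
        SmallComponents G (L \ L') k

/-- Weighted hyperfiniteness. -/
def WeightedHyperfinite (G : SimpleGraph V) : Prop :=
  ∀ ε : ℝ, 0 < ε → ∃ k : ℕ, 0 < k ∧
    ∀ w : V → ℝ, (Function.support w).Finite → (∀ x, 0 ≤ w x) →
      ∃ L : Set V, (∑ᶠ x ∈ L, w x) ≤ ε * (∑ᶠ x, w x) ∧ SmallComponents G Lᶜ k

/-- `Y` is a `k`-separator: deleting `Y` leaves components of size at most `k`. -/
def IsSeparator (G : SimpleGraph V) (k : ℕ) (Y : Set V) : Prop :=
  SmallComponents G Yᶜ k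

/-- The space of `k`-separators, as a subspace of `V → Bool` (product of discrete
spaces); its Borel σ-algebra coincides with the induced product σ-algebra used here. -/
abbrev SepSpace (G : SimpleGraph V) (k : ℕ) :=
  {f : V → Bool // IsSeparator G k {x | f x = true}}

/-- Strong hyperfiniteness. -/
def StronglyHyperfinite (G : SimpleGraph V) : Prop :=
  ∀ ε : ℝ, 0 < ε → ∃ k : ℕ, 0 < k ∧
    ∃ μ : Measure (SepSpace G k), μ Set.univ = 1 ∧
      ∀ x : V, μ {Y : SepSpace G k | Y.1 x = true} < ENNReal.ofReal ε

/-- An `(ε,r)`-Følner packing, encoded as a partial equivalence relation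
`p : V → V → Bool` ("being in the same member of the packing"); the classes are the
members of the packing, and `p x x = false` exactly when `x` is not covered. -/
structure IsPacking (G : SimpleGraph V) (ε : ℝ) (r : ℕ) (p : V → V → Bool) : Prop where
  symm : ∀ x y, p x y = true → p y x = true
  trans : ∀ x y z, p x y = true → p y z = true → p x z = true
  folner : ∀ x, p x x = true → IsFolner G ε {y | p x y = true}
  diam : ∀ x, p x x = true → DiamLE G r {y | p x y = true}

/-- The space of `(ε,r)`-packings of `G`, as a subspace of `V → V → Bool`. -/
abbrev PackingSpace (G : SimpleGraph V) (ε : ℝ) (r : ℕ) :=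
  {p : V → V → Bool // IsPacking G ε r p}

/-- Strong Følner hyperfiniteness. -/
def StronglyFolnerHyperfinite (G : SimpleGraph V) : Prop :=
  ∀ ε : ℝ, 0 < ε → ∃ r : ℕ, 1 ≤ r ∧
    ∃ ν : Measure (PackingSpace G ε r), ν Set.univ = 1 ∧
      ∀ x : V, ENNReal.ofReal (1 - ε) < ν {P : PackingSpace G ε r | P.1 x x = true}

/-- A packing is a tiling when it covers every vertex. -/
def IsTiling (p : V → V → Bool) : Prop := ∀ x, p x x = true

/-- Strong almost finiteness. -/
def StronglyAlmostFinite (G : SimpleGraph V) : Prop :=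
  ∀ ε : ℝ, 0 < ε → ∃ r : ℕ, 1 ≤ r ∧
    ∃ ν : Measure (PackingSpace G ε r), ν Set.univ = 1 ∧
      ν {P : PackingSpace G ε r | IsTiling P.1} = 1 ∧
      ∀ x : V, ν {P : PackingSpace G ε r | x ∈ boundary G {y | P.1 x y = true}} <
        ENNReal.ofReal ε

/-- Almost finiteness: `V(G)` can be tiled by `ε`-Følner sets of diameter at most `r`. -/
def AlmostFinite (G : SimpleGraph V) : Prop :=
  ∀ ε : ℝ, 0 < ε → ∃ r : ℕ, ∃ T : Set (Set V),
    (∀ F ∈ T, IsFolner G ε F ∧ DiamLE G r F) ∧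
    T.PairwiseDisjoint id ∧ ⋃₀ T = Set.univ

/-- Uniform amenability. -/
def UniformlyAmenable (G : SimpleGraph V) : Prop :=
  ∀ ε : ℝ, 0 < ε → ∃ r : ℕ, ∀ x : V, ∃ F : Set V, F ⊆ gball G x r ∧ IsFolner G ε F

/-- The `r`-neighborhood of a set `L`. -/
def setBall (G : SimpleGraph V) (L : Set V) (r : ℕ) : Set V :=
  ⋃ x ∈ L, gball G x r

/-- The uniform Følner property. -/
def UniformlyFolner (G : SimpleGraph V) : Prop :=
  ∀ ε : ℝ, 0 < ε → ∃ r : ℕ, 1 < r ∧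
    ∀ L : Set V, L.Finite → L.Nonempty →
      ∃ H : Set V, L ⊆ H ∧ H ⊆ setBall G L r ∧ IsFolner G ε H

/-- The Følner sum `Σ_x Σ_{y ∼ x} |f(x) − f(y)|`. -/
noncomputable def FolnerSum (G : SimpleGraph V) (f : V → ℝ) : ℝ :=
  ∑ᶠ x, ∑ᶠ y ∈ G.neighborSet x, |f x - f y|

/-- `f` is an `ε`-Følner function. -/
def IsFolnerFun (G : SimpleGraph V) (ε : ℝ) (f : V → ℝ) : Prop :=
  (Function.support f).Finite ∧ (∀ x, 0 ≤ f x) ∧ f ≠ 0 ∧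
    FolnerSum G f < ε * (∑ᶠ x, f x)

/-- `f` is an `ε`-Følner probability measure. -/
def IsFolnerProb (G : SimpleGraph V) (ε : ℝ) (f : V → ℝ) : Prop :=
  IsFolnerFun G ε f ∧ (∑ᶠ x, f x) = 1

/-- Følner Property A. -/
def FolnerPropertyA (G : SimpleGraph V) : Prop :=
  ∀ ε : ℝ, 0 < ε → ∃ r : ℕ, 1 ≤ r ∧
    ∃ Θ : V → V → ℝ,
      (∀ x, IsFolnerProb G ε (Θ x)) ∧
      (∀ x y, Θ x y ≠ 0 → y ∈ gball G x r) ∧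
      (∀ x y, G.Adj x y → (∑ᶠ z, |Θ x z - Θ y z|) < ε)

/-- The collection of `ε`-Følner sets of diameter at most `r`. -/
def FolnerSets (G : SimpleGraph V) (ε : ℝ) (r : ℕ) : Set (Set V) :=
  {H | IsFolner G ε H ∧ DiamLE G r H}

/-- Fractional almost finiteness. -/
def FractionallyAlmostFinite (G : SimpleGraph V) : Prop :=
  ∀ ε : ℝ, 0 < ε → ∃ r : ℕ, 1 ≤ r ∧
    ∃ F : Set V → ℝ,
      (∀ H ∈ FolnerSets G ε r, 0 ≤ F H) ∧
      (∀ x : V, ∃ c : ℝ, 0 ≤ c ∧ c < ε ∧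
        (∑ᶠ H ∈ {H ∈ FolnerSets G ε r | x ∈ H}, F H) = 1 - c) ∧
      (∀ x : V, (∑ᶠ H ∈ {H ∈ FolnerSets G ε r | x ∈ boundary G H}, F H) < ε)

/-- Subexponential growth: `lim_{r→∞} sup_x log|B_r(x)|/r = 0`. -/
def SubexpGrowth (G : SimpleGraph V) : Prop :=
  ∀ ε : ℝ, 0 < ε → ∃ R : ℕ, ∀ r : ℕ, R ≤ r → ∀ x : V,
    Real.log ((gball G x r).ncard : ℝ) < ε * (r : ℝ)

/-- The rooted `r`-ball of `G` at `v` is rooted-isomorphic to the rooted `r`-ball of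
`H` at `w`. -/
def BallIso (G : SimpleGraph V) (v : V) (H : SimpleGraph W) (w : W) (r : ℕ) : Prop :=
  ∃ (hv : v ∈ gball G v r) (hw : w ∈ gball H w r)
    (φ : ↥(gball G v r) ≃ ↥(gball H w r)),
      φ ⟨v, hv⟩ = ⟨w, hw⟩ ∧
      ∀ a b : ↥(gball G v r), G.Adj ↑a ↑b ↔ H.Adj ↑(φ a) ↑(φ b)

/-- Neighborhood equivalence of graphs. -/
def NeighborhoodEquiv (G : SimpleGraph V) (H : SimpleGraph W) : Prop :=
  (∀ (r : ℕ) (v : V), ∃ w : W, BallIso G v H w r) ∧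
  (∀ (r : ℕ) (w : W), ∃ v : V, BallIso H w G v r)

end AFPaper
namespace AFPaper

/-- The Cayley graph of `Γ` with respect to the (symmetric) generating set `S`. -/
def cayleyGraph (Γ : Type*) [Group Γ] (S : Finset Γ) : SimpleGraph Γ where
  Adj x y := x ≠ y ∧ ∃ σ ∈ S, y = x * σ ∨ x = y * σ
  symm := by
    constructor
    rintro x y ⟨hne, σ, hσ, hor⟩
    exact ⟨hne.symm, σ, hσ, hor.symm⟩
  loopless := by
    constructor
    rintro x ⟨hne, -⟩
    exact hne rfl

/-- The Schreier graph on the right cosets of `H` in `Γ`, with respect to the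
(symmetric) generating set `S`: `Ha` is adjacent to `Hb ≠ Ha` iff `Hb = Haσ` for
some `σ ∈ S` (the condition is symmetrized, which is no change for symmetric `S`). -/
def schreierGraph (Γ : Type*) [Group Γ] (S : Finset Γ) (H : Subgroup Γ) :
    SimpleGraph (Quotient (QuotientGroup.rightRel H)) where
  Adj a b := a ≠ b ∧ ∃ σ ∈ S,
    ((∃ x : Γ, Quotient.mk (QuotientGroup.rightRel H) x = a ∧
        Quotient.mk (QuotientGroup.rightRel H) (x * σ) = b) ∨
      (∃ x : Γ, Quotient.mk (QuotientGroup.rightRel H) x = b ∧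
        Quotient.mk (QuotientGroup.rightRel H) (x * σ) = a))
  symm := by
    constructor
    rintro a b ⟨hne, σ, hσ, hor⟩
    exact ⟨hne.symm, σ, hσ, hor.symm⟩
  loopless := by
    constructor
    rintro a ⟨hne, -⟩
    exact hne rfl

/-- `Γ` is amenable (Følner condition) with respect to the generating set `S`:
for every `ε > 0` there is a finite set `F` with `|F △ σF| < ε|F|` for all `σ ∈ S`. -/
def GroupFolner (Γ : Type*) [Group Γ] (S : Finset Γ) : Prop :=
  ∀ ε : ℝ, 0 < ε → ∃ F : Finset Γ, F.Nonempty ∧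
    ∀ σ ∈ S, ((symmDiff (F : Set Γ) ((fun x => σ * x) '' (F : Set Γ))).ncard : ℝ)
      < ε * (F.card : ℝ)

end AFPaper

namespace AFPaper

section Helpers

variable {Γ : Type} [Group Γ]

/-- Right multiplication by `σ` on right cosets. -/
def rcmul (H : Subgroup Γ) (σ : Γ) :
    Quotient (QuotientGroup.rightRel H) → Quotient (QuotientGroup.rightRel H) :=
  Quotient.map (· * σ) (by
    intro a b hab
    have hab' : b * a⁻¹ ∈ H := QuotientGroup.rightRel_apply.mp hab
    refine QuotientGroup.rightRel_apply.mpr ?_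
    have h : b * σ * (a * σ)⁻¹ = b * a⁻¹ := by group
    rw [h]; exact hab')

lemma rcmul_mk (H : Subgroup Γ) (σ x : Γ) :
    rcmul H σ (Quotient.mk (QuotientGroup.rightRel H) x)
      = Quotient.mk (QuotientGroup.rightRel H) (x * σ) :=
  Quotient.map_mk _ _ _

end Helpers

set_option maxHeartbeats 1000000 in
/-- after removing a small set `J`, the image of a δ-Følner set of the
Cayley graph under the quotient map is an ε-Følner set of the Schreier graph. -/
theorem folner_image_in_schreier
    (Γ : Type) [Group Γ] (S : Finset Γ)
    (hsym : ∀ σ ∈ S, σ⁻¹ ∈ S)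
    (hgen : Subgroup.closure (S : Set Γ) = ⊤)
    (hamen : GroupFolner Γ S) :
    ∀ ε : ℝ, 0 < ε → ∃ δ : ℝ, 0 < δ ∧
      ∀ (H : Subgroup Γ) (Q : Set Γ), IsFolner (cayleyGraph Γ S) δ Q →
        ∃ J : Set Γ, J ⊆ Q ∧ ((J.ncard : ℝ) < ε * (Q.ncard : ℝ)) ∧
          IsFolner (schreierGraph Γ S H) ε
            ((fun x => Quotient.mk (QuotientGroup.rightRel H) x) '' (Q \ J)) := by
  classical
  intro ε hε
  set ε₀ : ℝ := min ε 1 with hε₀def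
  have hε₀ : 0 < ε₀ := lt_min hε one_pos
  have hε₀ε : ε₀ ≤ ε := min_le_left _ _
  have hε₀1 : ε₀ ≤ 1 := min_le_right _ _
  set δ : ℝ := ε₀ ^ 2 / (S.card + 1) with hδdef
  have hδ : 0 < δ := by positivity
  refine ⟨δ, hδ, ?_⟩
  intro H Q hQ
  obtain ⟨Qfin, hQb⟩ := hQ
  -- Q is nonempty
  rcases Q.eq_empty_or_nonempty with rfl | Qne
  · exfalso
    have hb : boundaryIn (cayleyGraph Γ S) Set.univ (∅ : Set Γ) = ∅ := by
      ext x; simp [boundaryIn]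
    rw [hb] at hQb
    simp at hQb
  set π : Γ → Quotient (QuotientGroup.rightRel H) :=
    fun x => Quotient.mk (QuotientGroup.rightRel H) x with hπdef
  have hπmul : ∀ (σ x : Γ), π (x * σ) = rcmul H σ (π x) := by
    intro σ x; rw [hπdef]; exact (rcmul_mk H σ x).symm
  set Qf : Finset Γ := Qfin.toFinset with hQfdef
  have hQcoe : (Qf : Set Γ) = Q := Qfin.coe_toFinset
  have hmemQf : ∀ x, x ∈ Qf ↔ x ∈ Q := fun x => Qfin.mem_toFinset
  have Qpos : 0 < Qf.card := by
    rw [Finset.card_pos]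
    obtain ⟨x, hx⟩ := Qne
    exact ⟨x, (hmemQf x).mpr hx⟩
  have hQcard : Q.ncard = Qf.card := Set.ncard_eq_toFinset_card Q Qfin
  set Bset : Set Γ := boundary (cayleyGraph Γ S) Q with hBdef
  have hBsub : Bset ⊆ Q := fun x hx => hx.1
  have Bfin : Bset.Finite := Qfin.subset hBsub
  set Bf : Finset Γ := Bfin.toFinset with hBfdef
  have hmemBf : ∀ x, x ∈ Bf ↔ x ∈ Bset := fun x => Bfin.mem_toFinset
  have hQb' : (Bf.card : ℝ) < δ * Qf.card := by
    have h1 : Bset.ncard = Bf.card := Set.ncard_eq_toFinset_card Bset Bfin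
    calc (Bf.card : ℝ) = (Bset.ncard : ℝ) := by rw [h1]
      _ < δ * Qf.card := by rw [← hQcard]; exact hQb
  set w : Quotient (QuotientGroup.rightRel H) → ℕ :=
    fun c => (Qf.filter (fun q => π q = c)).card with hwdef
  set P : Finset (Quotient (QuotientGroup.rightRel H)) := Qf.image π with hPdef
  have hwP : ∀ c, 0 < w c → c ∈ P := by
    intro c hc
    rw [hwdef] at hc
    obtain ⟨q, hq⟩ := Finset.card_pos.mp hc
    rw [Finset.mem_filter] at hq
    exact hq.2 ▸ Finset.mem_image_of_mem π hq.1
  have hwle : ∀ c, w c ≤ Qf.card := fun c => Finset.card_filter_le _ _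
  have hsumw : ∑ c ∈ P, w c = Qf.card :=
    (Finset.card_eq_sum_card_fiberwise (fun x hx => Finset.mem_image_of_mem π hx)).symm
  -- Key fiber estimate: moving the fiber by σ lands in the fiber of `rcmul H σ c`,
  -- except for boundary points.
  have hkey : ∀ σ ∈ S, ∀ c, w c ≤ (Bf.filter (fun q => π q = c)).card + w (rcmul H σ c) := by
    intro σ hσ c
    have hsplit : ((Qf.filter (fun q => π q = c)).filter (fun q => q * σ ∈ Qf)).card
        + ((Qf.filter (fun q => π q = c)).filter (fun q => ¬ q * σ ∈ Qf)).card = w c :=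
      Finset.card_filter_add_card_filter_not _
    have h1 : ((Qf.filter (fun q => π q = c)).filter (fun q => q * σ ∈ Qf)).card
        ≤ w (rcmul H σ c) := by
      apply Finset.card_le_card_of_injOn (fun q => q * σ)
      · intro q hq
        simp only [Finset.mem_coe, Finset.mem_filter] at hq ⊢
        exact ⟨hq.2, by rw [hπmul σ q, hq.1.2]⟩
      · intro a _ b _ hab
        exact mul_right_cancel hab
    have h2 : ((Qf.filter (fun q => π q = c)).filter (fun q => ¬ q * σ ∈ Qf)).card
        ≤ (Bf.filter (fun q => π q = c)).card := by
      apply Finset.card_le_card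
      intro q hq
      simp only [Finset.mem_filter] at hq ⊢
      refine ⟨?_, hq.1.2⟩
      rw [hmemBf]
      have hqQ : q ∈ Q := (hmemQf q).mp hq.1.1
      have hqσ : q * σ ∉ Q := fun h => hq.2 ((hmemQf _).mpr h)
      have hne : q ≠ q * σ := by
        intro h
        exact hqσ (h ▸ hqQ)
      exact ⟨hqQ, q * σ, ⟨⟨Set.mem_univ _, hqσ⟩, hne, σ, hσ, Or.inl rfl⟩⟩
    omega
  -- the fibers of the boundary sum to its cardinality
  have hsumB : ∑ c ∈ P, (Bf.filter (fun q => π q = c)).card = Bf.card := by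
    refine (Finset.card_eq_sum_card_fiberwise ?_).symm
    intro x hx
    have : x ∈ Qf := (hmemQf x).mpr (hBsub ((hmemBf x).mp hx))
    exact Finset.mem_image_of_mem π this
  -- Schreier neighbors are right translates
  have hadj : ∀ c d, (schreierGraph Γ S H).Adj c d → ∃ σ ∈ S, d = rcmul H σ c := by
    rintro c d ⟨hne, σ, hσ, ⟨x, hx, hxσ⟩ | ⟨x, hx, hxσ⟩⟩
    · exact ⟨σ, hσ, by rw [← hx, ← hxσ]; exact (hπmul σ x).symm⟩
    · refine ⟨σ⁻¹, hsym σ hσ, ?_⟩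
      have h1 : π x = rcmul H σ⁻¹ (π (x * σ)) := by
        rw [← hπmul σ⁻¹ (x * σ), mul_inv_cancel_right]
      rw [← hx, ← hxσ]
      exact h1
  -- level sets
  set F : ℕ → Finset (Quotient (QuotientGroup.rightRel H)) :=
    fun t => P.filter (fun c => t < w c) with hFdef
  set A : ℕ → ℕ := fun t => ∑ c ∈ P, min (w c) t with hAdef
  have hAF : ∀ K, ∑ t ∈ Finset.range K, (F t).card = A K := by
    intro K
    rw [hAdef]
    simp only [hFdef, Finset.card_filter]
    rw [Finset.sum_comm]
    refine Finset.sum_congr rfl ?_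
    intro c _
    rw [← Finset.card_filter]
    have : (Finset.range K).filter (fun t => t < w c) = Finset.range (min (w c) K) := by
      ext t
      simp [Finset.mem_filter, Finset.mem_range, lt_min_iff, and_comm]
    rw [this, Finset.card_range]
  have hex : ∃ T : ℕ, ε₀ * (Qf.card : ℝ) ≤ (A T : ℝ) := by
    refine ⟨Qf.card, ?_⟩
    have hAQ : A Qf.card = Qf.card := by
      rw [hAdef]
      calc ∑ c ∈ P, min (w c) Qf.card = ∑ c ∈ P, w c :=
            Finset.sum_congr rfl fun c _ => min_eq_left (hwle c)
        _ = Qf.card := hsumw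
    rw [hAQ]
    have hQR : (0 : ℝ) < (Qf.card : ℝ) := (Nat.cast_pos (α := ℝ)).mpr Qpos
    nlinarith
  set T : ℕ := Nat.find hex with hTdef
  have hT : ε₀ * (Qf.card : ℝ) ≤ (A T : ℝ) := Nat.find_spec hex
  have hTmin : ∀ t, t < T → (A t : ℝ) < ε₀ * (Qf.card : ℝ) := by
    intro t ht
    exact lt_of_not_ge (Nat.find_min hex ht)
  set D : ℕ → Finset (Quotient (QuotientGroup.rightRel H)) :=
    fun t => (F t).filter (fun c => ∃ σ ∈ S, w (rcmul H σ c) ≤ t) with hDdef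
  -- co-area estimate: there is a good level
  have hgood : ∃ t, t < T ∧ ((D t).card : ℝ) < ε₀ * ((F t).card : ℝ) := by
    by_contra hcon
    push_neg at hcon
    have hsum1 : ∑ t ∈ Finset.range T, (D t).card ≤ S.card * Bf.card := by
      calc ∑ t ∈ Finset.range T, (D t).card
          ≤ ∑ t ∈ Finset.range T, ∑ σ ∈ S,
              (P.filter (fun c => w (rcmul H σ c) ≤ t ∧ t < w c)).card := by
            refine Finset.sum_le_sum ?_
            intro t _
            refine le_trans (Finset.card_le_card ?_) Finset.card_biUnion_le
            intro c hc
            simp only [hDdef, hFdef, Finset.mem_filter] at hc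
            obtain ⟨⟨hcP, hct⟩, σ, hσ, hcσ⟩ := hc
            exact Finset.mem_biUnion.mpr ⟨σ, hσ, Finset.mem_filter.mpr ⟨hcP, hcσ, hct⟩⟩
        _ = ∑ σ ∈ S, ∑ t ∈ Finset.range T,
              (P.filter (fun c => w (rcmul H σ c) ≤ t ∧ t < w c)).card := Finset.sum_comm
        _ ≤ ∑ σ ∈ S, Bf.card := by
            refine Finset.sum_le_sum ?_
            intro σ hσ
            calc ∑ t ∈ Finset.range T,
                  (P.filter (fun c => w (rcmul H σ c) ≤ t ∧ t < w c)).card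
                = ∑ c ∈ P, ((Finset.range T).filter
                    (fun t => w (rcmul H σ c) ≤ t ∧ t < w c)).card := by
                  simp only [Finset.card_filter]
                  exact Finset.sum_comm
              _ ≤ ∑ c ∈ P, (w c - w (rcmul H σ c)) := by
                  refine Finset.sum_le_sum ?_
                  intro c _
                  have hsub : (Finset.range T).filter
                      (fun t => w (rcmul H σ c) ≤ t ∧ t < w c)
                      ⊆ Finset.Ico (w (rcmul H σ c)) (w c) := by
                    intro t ht
                    simp only [Finset.mem_filter, Finset.mem_range] at ht
                    exact Finset.mem_Ico.mpr ht.2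
                  simpa [Nat.card_Ico] using Finset.card_le_card hsub
              _ ≤ ∑ c ∈ P, (Bf.filter (fun q => π q = c)).card := by
                  refine Finset.sum_le_sum ?_
                  intro c _
                  have := hkey σ hσ c
                  omega
              _ = Bf.card := hsumB
        _ = S.card * Bf.card := by rw [Finset.sum_const, smul_eq_mul]
    have hsum2 : ε₀ * (A T : ℝ) ≤ (S.card : ℝ) * (Bf.card : ℝ) := by
      have h1 : ε₀ * (A T : ℝ) ≤ ∑ t ∈ Finset.range T, ((D t).card : ℝ) := by
        rw [← hAF T]
        push_cast
        rw [Finset.mul_sum]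
        exact Finset.sum_le_sum fun t ht => hcon t (Finset.mem_range.mp ht)
      calc ε₀ * (A T : ℝ) ≤ ∑ t ∈ Finset.range T, ((D t).card : ℝ) := h1
        _ ≤ (S.card : ℝ) * (Bf.card : ℝ) := by exact_mod_cast Nat.cast_le.mpr hsum1
    have hQR : (0 : ℝ) < (Qf.card : ℝ) := Nat.cast_pos.mpr Qpos
    have hSR : (0 : ℝ) ≤ (S.card : ℝ) := Nat.cast_nonneg _
    have hδeq : δ * ((S.card : ℝ) + 1) = ε₀ ^ 2 := by
      rw [hδdef]; field_simp
    nlinarith [mul_le_mul_of_nonneg_left hQb'.le hSR,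
      mul_le_mul_of_nonneg_left hT (le_of_lt hε₀)]
  obtain ⟨t, htT, hDt⟩ := hgood
  -- the removed set J
  refine ⟨{q ∈ Q | w (π q) ≤ t}, fun q hq => hq.1, ?_, ?_⟩
  · -- |J| < ε |Q|
    set Jf : Finset Γ := Qf.filter (fun q => w (π q) ≤ t) with hJfdef
    have hJset : {q ∈ Q | w (π q) ≤ t} = (Jf : Set Γ) := by
      ext q
      simp [hJfdef, hmemQf, Finset.mem_coe]
    rw [hJset, Set.ncard_coe_finset]
    have hJle : Jf.card ≤ A t := by
      rw [hAdef]
      rw [Finset.card_eq_sum_card_fiberwise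
        (f := π) (t := P) (fun x hx => Finset.mem_image_of_mem π (Finset.filter_subset _ _ hx))]
      refine Finset.sum_le_sum ?_
      intro c _
      by_cases hc : w c ≤ t
      · calc (Jf.filter (fun q => π q = c)).card ≤ (Qf.filter (fun q => π q = c)).card := by
              apply Finset.card_le_card
              intro q hq
              simp only [hJfdef, Finset.mem_filter] at hq ⊢
              exact ⟨hq.1.1, hq.2⟩
          _ = w c := rfl
          _ = min (w c) t := (min_eq_left hc).symm
      · have hempty : Jf.filter (fun q => π q = c) = ∅ := by
          refine Finset.filter_eq_empty_iff.mpr ?_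
          intro q hq
          simp only [hJfdef, Finset.mem_filter] at hq
          intro hqc
          exact hc (hqc ▸ hq.2)
        rw [hempty]
        simp
    have := hTmin t htT
    rw [hQcard]
    calc (Jf.card : ℝ) ≤ (A t : ℝ) := Nat.cast_le.mpr hJle
      _ < ε₀ * (Qf.card : ℝ) := this
      _ ≤ ε * (Qf.card : ℝ) := by
          apply mul_le_mul_of_nonneg_right hε₀ε (Nat.cast_nonneg _)
  · -- the image is ε-Følner
    have himg : π '' (Q \ {q ∈ Q | w (π q) ≤ t}) = ((F t : Finset _) : Set _) := by
      ext c
      constructor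
      · rintro ⟨q, ⟨hqQ, hqJ⟩, rfl⟩
        have hwq : t < w (π q) := by
          by_contra hle
          exact hqJ ⟨hqQ, le_of_not_gt hle⟩
        simp only [hFdef, Finset.coe_filter, Set.mem_setOf_eq]
        exact ⟨Finset.mem_image_of_mem π ((hmemQf q).mpr hqQ), hwq⟩
      · intro hc
        simp only [hFdef, Finset.coe_filter, Set.mem_setOf_eq] at hc
        obtain ⟨hcP, hct⟩ := hc
        have hpos : 0 < w c := lt_of_le_of_lt (Nat.zero_le t) hct
        obtain ⟨q, hq⟩ := Finset.card_pos.mp hpos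
        rw [Finset.mem_filter] at hq
        refine ⟨q, ⟨(hmemQf q).mp hq.1, ?_⟩, hq.2⟩
        intro hqJ
        have hle : w (π q) ≤ t := hqJ.2
        rw [hq.2] at hle
        omega
    rw [himg]
    refine ⟨(F t).finite_toSet, ?_⟩
    have hbsub : boundary (schreierGraph Γ S H) ((F t : Finset _) : Set _)
        ⊆ ((D t : Finset _) : Set _) := by
      rintro c ⟨hcF, d, ⟨-, hdF⟩, hcd⟩
      obtain ⟨σ, hσ, rfl⟩ := hadj c d hcd
      have hcF' : c ∈ F t := Finset.mem_coe.mp hcF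
      have hc1 := hcF'
      simp only [hFdef, Finset.mem_filter] at hc1
      have hwd : w (rcmul H σ c) ≤ t := by
        by_contra hgt
        push_neg at hgt
        refine hdF (Finset.mem_coe.mpr ?_)
        simp only [hFdef, Finset.mem_filter]
        exact ⟨hwP _ (lt_of_le_of_lt (Nat.zero_le t) hgt), hgt⟩
      refine Finset.mem_coe.mpr ?_
      simp only [hDdef, Finset.mem_filter]
      exact ⟨hcF', σ, hσ, hwd⟩
    calc ((boundary (schreierGraph Γ S H) ((F t : Finset _) : Set _)).ncard : ℝ)
        ≤ ((D t).card : ℝ) := by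
          have := Set.ncard_le_ncard hbsub (D t).finite_toSet
          rw [Set.ncard_coe_finset] at this
          exact_mod_cast this
      _ < ε₀ * ((F t).card : ℝ) := hDt
      _ ≤ ε * (((F t : Finset (Quotient (QuotientGroup.rightRel H))) :
            Set (Quotient (QuotientGroup.rightRel H))).ncard : ℝ) := by
          rw [Set.ncard_coe_finset]
          apply mul_le_mul_of_nonneg_right hε₀ε (Nat.cast_nonneg _)

end AFPaper
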